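/- Let T be a bounded operator on a complex Hilbert space and r ≥ 1 a real number. Then w(T)^(2r) ≤ (1/2)·(w(T²)^r + ‖T‖^(2r)); moreover the bound (1/2)·w(T²)^r + (1/2^(r+1))·‖T T* + T* T‖^r is at most (1/2)·w(T²)^r + (1/2)·‖T‖^(2r), i.e., (1/2^(r+1))·‖T T* + T* T‖^r ≤ (1/2)·‖T‖^(2r). -/

import Mathlib

open scoped InnerProductSpace
open ContinuousLinearMap
noncomputable section
set_option synthInstance.maxHeartbeats 1000000
set_option maxHeartbeats 1000000

variable {H : Type*} [NormedAddCommGroup H] [InnerProductSpace ℂ H] [CompleteSpace H]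

/-- The numerical radius of a bounded operator. -/
noncomputable def numRadius (T : H →L[ℂ] H) : ℝ :=
  sSup {r : ℝ | ∃ x : H, ‖x‖ = 1 ∧ r = ‖(⟪T x, x⟫_ℂ)‖}

/-- The 2×2 block operator [[X, Y],[Z, W]] on H ⊕ H (ℓ² direct sum). -/
noncomputable def blockOp (X Y Z W : H →L[ℂ] H) :
    WithLp 2 (H × H) →L[ℂ] WithLp 2 (H × H) :=
  ((WithLp.prodContinuousLinearEquiv 2 ℂ H H).symm.toContinuousLinearMap) ∘L
    ((X ∘L ContinuousLinearMap.fst ℂ H H + Y ∘L ContinuousLinearMap.snd ℂ H H).prod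
      (Z ∘L ContinuousLinearMap.fst ℂ H H + W ∘L ContinuousLinearMap.snd ℂ H H)) ∘L
    ((WithLp.prodContinuousLinearEquiv 2 ℂ H H).toContinuousLinearMap)

set_option linter.unusedSectionVars false

/-- Buzano's inequality. -/
lemma buzano_aux (e a b : H) (he : ‖e‖ = 1) :
    2 * (‖⟪a, e⟫_ℂ‖ * ‖⟪e, b⟫_ℂ‖) ≤ ‖a‖ * ‖b‖ + ‖⟪a, b⟫_ℂ‖ := by
  set c : H := ((2 : ℂ) * ⟪e, a⟫_ℂ) • e - a with hc
  have hcn : ‖c‖ = ‖a‖ := by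
    have h1 : ‖c‖ ^ 2 = ‖a‖ ^ 2 := by
      rw [hc, @norm_sub_sq ℂ]
      have hco : (starRingEnd ℂ) ((2 : ℂ) * ⟪e, a⟫_ℂ) * ⟪e, a⟫_ℂ
          = 2 * (‖⟪e, a⟫_ℂ‖ : ℂ) ^ 2 := by
        rw [map_mul, map_ofNat, mul_assoc, RCLike.conj_mul]; norm_num
      have h5 : (RCLike.re (2 * (‖⟪e, a⟫_ℂ‖ : ℂ) ^ 2) : ℝ) = 2 * ‖⟪e, a⟫_ℂ‖ ^ 2 := by
        simp [Complex.ofReal_pow]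
        norm_cast
      rw [inner_smul_left, hco, norm_smul, he, h5]
      simp [norm_mul]
      ring
    nlinarith [norm_nonneg c, norm_nonneg a]
  have h2 : ⟪c, b⟫_ℂ = 2 * (⟪a, e⟫_ℂ * ⟪e, b⟫_ℂ) - ⟪a, b⟫_ℂ := by
    rw [hc, inner_sub_left, inner_smul_left]
    rw [map_mul, map_ofNat, inner_conj_symm]
    ring
  have h3 : ‖(2 : ℂ) * (⟪a, e⟫_ℂ * ⟪e, b⟫_ℂ)‖ ≤ ‖⟪c, b⟫_ℂ‖ + ‖⟪a, b⟫_ℂ‖ := by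
    have : (2 : ℂ) * (⟪a, e⟫_ℂ * ⟪e, b⟫_ℂ) = ⟪c, b⟫_ℂ + ⟪a, b⟫_ℂ := by rw [h2]; ring
    rw [this]; exact norm_add_le _ _
  have h4 : ‖⟪c, b⟫_ℂ‖ ≤ ‖a‖ * ‖b‖ := hcn ▸ norm_inner_le_norm c b
  calc 2 * (‖⟪a, e⟫_ℂ‖ * ‖⟪e, b⟫_ℂ‖) = ‖(2 : ℂ) * (⟪a, e⟫_ℂ * ⟪e, b⟫_ℂ)‖ := by
        simp [norm_mul]
    _ ≤ ‖⟪c, b⟫_ℂ‖ + ‖⟪a, b⟫_ℂ‖ := h3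
    _ ≤ ‖a‖ * ‖b‖ + ‖⟪a, b⟫_ℂ‖ := by linarith

lemma numRadius_nonneg (T : H →L[ℂ] H) : 0 ≤ numRadius T := by
  apply Real.sSup_nonneg
  rintro r ⟨x, -, rfl⟩; exact norm_nonneg _

lemma numRadius_bddAbove (T : H →L[ℂ] H) :
    BddAbove {r : ℝ | ∃ x : H, ‖x‖ = 1 ∧ r = ‖(⟪T x, x⟫_ℂ)‖} := by
  refine ⟨‖T‖, ?_⟩
  rintro r ⟨x, hx, rfl⟩
  calc ‖⟪T x, x⟫_ℂ‖ ≤ ‖T x‖ * ‖x‖ := norm_inner_le_norm _ _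
    _ ≤ ‖T‖ * ‖x‖ * ‖x‖ := by
        have := T.le_opNorm x
        nlinarith [norm_nonneg x]
    _ = ‖T‖ := by rw [hx]; ring

lemma inner_le_numRadius (T : H →L[ℂ] H) {x : H} (hx : ‖x‖ = 1) :
    ‖⟪T x, x⟫_ℂ‖ ≤ numRadius T :=
  le_csSup (numRadius_bddAbove T) ⟨x, hx, rfl⟩

lemma numRadius_sq_key (T : H →L[ℂ] H) :
    numRadius T ^ 2 ≤ (numRadius (T ^ 2) + ‖T‖ ^ 2) / 2 := by
  set B : ℝ := (numRadius (T ^ 2) + ‖T‖ ^ 2) / 2 with hB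
  have hB0 : 0 ≤ B := by
    have := numRadius_nonneg (T ^ 2)
    positivity
  have hle : numRadius T ≤ Real.sqrt B := by
    apply Real.sSup_le _ (Real.sqrt_nonneg B)
    rintro r ⟨x, hx, rfl⟩
    have key : ‖⟪T x, x⟫_ℂ‖ ^ 2 ≤ B := by
      have hbz := buzano_aux x (T x) (adjoint T x) hx
      have e1 : ⟪x, adjoint T x⟫_ℂ = ⟪T x, x⟫_ℂ := adjoint_inner_right T x x
      have e2 : ⟪T x, adjoint T x⟫_ℂ = ⟪(T ^ 2) x, x⟫_ℂ := by
        rw [adjoint_inner_right]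
        congr 1
      rw [e1, e2] at hbz
      have hTx : ‖T x‖ ≤ ‖T‖ := by simpa [hx] using T.le_opNorm x
      have hT'x : ‖adjoint T x‖ ≤ ‖T‖ := by
        have h := (adjoint T).le_opNorm x
        have : ‖adjoint T‖ = ‖T‖ := LinearIsometryEquiv.norm_map adjoint T
        simpa [hx, this] using h
      have hprod : ‖T x‖ * ‖adjoint T x‖ ≤ ‖T‖ ^ 2 := by
        nlinarith [norm_nonneg (T x), norm_nonneg (adjoint T x), norm_nonneg T]
      have hw2 : ‖⟪(T ^ 2) x, x⟫_ℂ‖ ≤ numRadius (T ^ 2) := inner_le_numRadius _ hx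
      have : 2 * ‖⟪T x, x⟫_ℂ‖ ^ 2 ≤ ‖T‖ ^ 2 + numRadius (T ^ 2) := by nlinarith
      rw [hB]; linarith
    exact (Real.le_sqrt (norm_nonneg _) hB0).2 key
  calc numRadius T ^ 2 ≤ Real.sqrt B ^ 2 := by
        have h0 := numRadius_nonneg T
        nlinarith [Real.sqrt_nonneg B]
    _ = B := Real.sq_sqrt hB0

lemma half_rpow {a b r : ℝ} (ha : 0 ≤ a) (hb : 0 ≤ b) (hr : 1 ≤ r) :
    ((a + b) / 2) ^ r ≤ (a ^ r + b ^ r) / 2 := by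
  have := Real.rpow_arith_mean_le_arith_mean_rpow (Finset.univ : Finset (Fin 2))
    ![1/2, 1/2] ![a, b] (by intro i _; fin_cases i <;> norm_num)
    (by simp [Fin.sum_univ_two]; norm_num)
    (by intro i _; fin_cases i <;> assumption) hr
  simpa [Fin.sum_univ_two, div_eq_mul_inv, mul_comm, add_mul] using this

theorem numRadius_pow_two_r_weaker_ineq (T : H →L[ℂ] H) (r : ℝ) (hr : 1 ≤ r) :
    numRadius T ^ (2 * r) ≤ (1 / 2) * (numRadius (T ^ 2) ^ r + ‖T‖ ^ (2 * r)) ∧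
      (1 / 2 ^ (r + 1)) * ‖T * adjoint T + adjoint T * T‖ ^ r ≤
        (1 / 2) * ‖T‖ ^ (2 * r) := by
  have hr0 : (0:ℝ) ≤ r := le_trans zero_le_one hr
  have hw0 : 0 ≤ numRadius T := numRadius_nonneg T
  have hw20 : 0 ≤ numRadius (T ^ 2) := numRadius_nonneg (T ^ 2)
  constructor
  · have h1 : numRadius T ^ (2 * r) = (numRadius T ^ 2) ^ r := by
      rw [Real.rpow_mul hw0, show ((2:ℝ)) = ((2:ℕ):ℝ) by norm_cast, Real.rpow_natCast]
    have h2 : ‖T‖ ^ (2 * r) = (‖T‖ ^ 2) ^ r := by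
      rw [Real.rpow_mul (norm_nonneg T), show ((2:ℝ)) = ((2:ℕ):ℝ) by norm_cast,
        Real.rpow_natCast]
    rw [h1, h2]
    calc (numRadius T ^ 2) ^ r
        ≤ ((numRadius (T ^ 2) + ‖T‖ ^ 2) / 2) ^ r :=
          Real.rpow_le_rpow (sq_nonneg _) (numRadius_sq_key T) hr0
      _ ≤ (numRadius (T ^ 2) ^ r + (‖T‖ ^ 2) ^ r) / 2 :=
          half_rpow hw20 (sq_nonneg _) hr
      _ = (1 / 2) * (numRadius (T ^ 2) ^ r + (‖T‖ ^ 2) ^ r) := by ring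
  · have hbound : ‖T * adjoint T + adjoint T * T‖ ≤ 2 * ‖T‖ ^ 2 := by
      have hadj : ‖adjoint T‖ = ‖T‖ := LinearIsometryEquiv.norm_map adjoint T
      calc ‖T * adjoint T + adjoint T * T‖
          ≤ ‖T * adjoint T‖ + ‖adjoint T * T‖ := norm_add_le _ _
        _ ≤ ‖T‖ * ‖adjoint T‖ + ‖adjoint T‖ * ‖T‖ := by
            gcongr <;> exact norm_mul_le _ _
        _ = 2 * ‖T‖ ^ 2 := by rw [hadj]; ring
    have hrle : ‖T * adjoint T + adjoint T * T‖ ^ r ≤ (2 * ‖T‖ ^ 2) ^ r :=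
      Real.rpow_le_rpow (norm_nonneg _) hbound hr0
    have hsplit : (2 * ‖T‖ ^ 2 : ℝ) ^ r = 2 ^ r * ‖T‖ ^ (2 * r) := by
      rw [Real.mul_rpow (by norm_num) (sq_nonneg _), Real.rpow_mul (norm_nonneg T),
        show ((2:ℝ)) = ((2:ℕ):ℝ) by norm_cast, Real.rpow_natCast]
    have hpow : (2:ℝ) ^ (r + 1) = 2 ^ r * 2 := by
      rw [Real.rpow_add (by norm_num), Real.rpow_one]
    have h2r : (0:ℝ) < 2 ^ r := Real.rpow_pos_of_pos (by norm_num) r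
    calc (1 / 2 ^ (r + 1)) * ‖T * adjoint T + adjoint T * T‖ ^ r
        ≤ (1 / 2 ^ (r + 1)) * (2 ^ r * ‖T‖ ^ (2 * r)) := by
          apply mul_le_mul_of_nonneg_left (hsplit ▸ hrle)
          positivity
      _ = (1 / 2) * ‖T‖ ^ (2 * r) := by
          rw [hpow]; field_simp
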